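/- Let a and b be positive integers. Let S_c denote the c×c lower shift matrix over ℚ, (S_c)_{p,q} = 1 if p = q+1 and 0 otherwise, and let D_c be the diagonal c×c matrix with (D_c)_{p,p} = (c+1)/2 − p. Then the ℚ-vector space V = {X ∈ Matrix (b×a) ℚ : S_b·X = X·S_a} has dimension min(a,b); moreover, for every t ∈ ℚ, the subspace {X ∈ V : D_b·X − X·D_a = t·X} is one-dimensional if t = −|a−b|/2 − s for some integer s with 0 ≤ s ≤ min(a,b)−1, and is zero otherwise. -/

import Mathlib

/-- The `c × c` lower shift matrix over `ℚ`: entry `(p,q)` is `1` if `p = q + 1`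
(in the `1,…,c` labelling) and `0` otherwise. -/
def shiftM (c : ℕ) : Matrix (Fin c) (Fin c) ℚ :=
  Matrix.of fun p q => if (p : ℕ) = (q : ℕ) + 1 then 1 else 0

/-- The diagonal `c × c` Weyl-vector matrix over `ℚ`: diagonal entry at row `p`
(in the `1,…,c` labelling) is `(c+1)/2 - p`. -/
def weylD (c : ℕ) : Matrix (Fin c) (Fin c) ℚ :=
  Matrix.diagonal fun p => ((c : ℚ) + 1) / 2 - ((p : ℕ) + 1)

/-- The linear map `X ↦ S_b · X - X · S_a` on `b × a` matrices over `ℚ`. -/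
def shiftComm (a b : ℕ) :
    Matrix (Fin b) (Fin a) ℚ →ₗ[ℚ] Matrix (Fin b) (Fin a) ℚ where
  toFun X := shiftM b * X - X * shiftM a
  map_add' X Y := by
    simp only [Matrix.mul_add, Matrix.add_mul]
    abel
  map_smul' c X := by
    simp only [Matrix.mul_smul, Matrix.smul_mul, smul_sub, RingHom.id_apply]

/-- The linear map `X ↦ D_b · X - X · D_a` on `b × a` matrices over `ℚ`. -/
def weylComm (a b : ℕ) :
    Matrix (Fin b) (Fin a) ℚ →ₗ[ℚ] Matrix (Fin b) (Fin a) ℚ where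
  toFun X := weylD b * X - X * weylD a
  map_add' X Y := by
    simp only [Matrix.mul_add, Matrix.add_mul]
    abel
  map_smul' c X := by
    simp only [Matrix.mul_smul, Matrix.smul_mul, smul_sub, RingHom.id_apply]

namespace BC

variable {a b : ℕ}

lemma mulS_left (X : Matrix (Fin b) (Fin a) ℚ) (p p' : Fin b) (q : Fin a)
    (hp : (p : ℕ) = (p' : ℕ) + 1) : (shiftM b * X) p q = X p' q := by
  rw [Matrix.mul_apply, Finset.sum_eq_single p']
  · simp [shiftM, hp]
  · intro r _ hr
    have hner : (p : ℕ) ≠ (r : ℕ) + 1 := by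
      intro hc; exact hr (Fin.ext (by omega))
    simp [shiftM, hner]
  · simp

lemma mulS_left0 (X : Matrix (Fin b) (Fin a) ℚ) (p : Fin b) (q : Fin a)
    (hp : (p : ℕ) = 0) : (shiftM b * X) p q = 0 := by
  rw [Matrix.mul_apply]
  apply Finset.sum_eq_zero
  intro r _
  have : (p : ℕ) ≠ (r : ℕ) + 1 := by omega
  simp [shiftM, this]

lemma mulS_right (X : Matrix (Fin b) (Fin a) ℚ) (p : Fin b) (q q' : Fin a)
    (hq : (q' : ℕ) = (q : ℕ) + 1) : (X * shiftM a) p q = X p q' := by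
  rw [Matrix.mul_apply, Finset.sum_eq_single q']
  · simp [shiftM, hq]
  · intro r _ hr
    have hner : (r : ℕ) ≠ (q : ℕ) + 1 := by
      intro hc; exact hr (Fin.ext (by omega))
    simp [shiftM, hner]
  · simp

lemma mulS_right0 (X : Matrix (Fin b) (Fin a) ℚ) (p : Fin b) (q : Fin a)
    (hq : (q : ℕ) + 1 = a) : (X * shiftM a) p q = 0 := by
  rw [Matrix.mul_apply]
  apply Finset.sum_eq_zero
  intro r _
  have : (r : ℕ) ≠ (q : ℕ) + 1 := by have := r.isLt; omega
  simp [shiftM, this]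

section key
variable {X : Matrix (Fin b) (Fin a) ℚ} (h : shiftM b * X = X * shiftM a)

include h

lemma keyA (p q : ℕ) (hp : p + 1 < b) (hq : q + 1 < a) :
    X ⟨p + 1, hp⟩ ⟨q + 1, hq⟩ = X ⟨p, by omega⟩ ⟨q, by omega⟩ := by
  have h2 := congrFun (congrFun h ⟨p + 1, hp⟩) ⟨q, by omega⟩
  rw [mulS_left X _ ⟨p, by omega⟩ _ rfl, mulS_right X _ _ ⟨q + 1, hq⟩ rfl] at h2
  exact h2.symm

lemma keyB (hb : 0 < b) (q : ℕ) (hq : q + 1 < a) :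
    X ⟨0, hb⟩ ⟨q + 1, hq⟩ = 0 := by
  have h2 := congrFun (congrFun h ⟨0, hb⟩) ⟨q, by omega⟩
  rw [mulS_left0 X _ _ rfl, mulS_right X _ _ ⟨q + 1, hq⟩ rfl] at h2
  exact h2.symm

lemma keyC (ha : 0 < a) (p : ℕ) (hp : p + 1 < b) :
    X ⟨p, by omega⟩ ⟨a - 1, by omega⟩ = 0 := by
  have h2 := congrFun (congrFun h ⟨p + 1, hp⟩) ⟨a - 1, by omega⟩
  rw [mulS_left X _ ⟨p, by omega⟩ _ rfl, mulS_right0 X _ _ (show (a-1)+1 = a by omega)] at h2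
  exact h2

lemma descend : ∀ (q p : ℕ) (hq : q < a) (hp : p < b), q ≤ p →
    X ⟨p, hp⟩ ⟨q, hq⟩ = X ⟨p - q, by omega⟩ ⟨0, by omega⟩ := by
  intro q
  induction q with
  | zero => intro p hq hp _; rfl
  | succ q ih =>
    intro p hq hp hqp
    have hp1 : p - 1 + 1 = p := by omega
    have step : X ⟨p, hp⟩ ⟨q + 1, hq⟩ = X ⟨p - 1, by omega⟩ ⟨q, by omega⟩ := by
      have := keyA h (p - 1) q (by omega) hq
      simpa [hp1] using this
    rw [step, ih (p - 1) (by omega) (by omega) (by omega)]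
    congr 1
    exact Fin.ext (by simp; omega)

lemma descend' : ∀ (p q : ℕ) (hp : p < b) (hq : q < a), p < q →
    X ⟨p, hp⟩ ⟨q, hq⟩ = X ⟨0, by omega⟩ ⟨q - p, by omega⟩ := by
  intro p
  induction p with
  | zero => intro q hp hq _; rfl
  | succ p ih =>
    intro q hp hq hpq
    have hq1 : q - 1 + 1 = q := by omega
    have step : X ⟨p + 1, hp⟩ ⟨q, hq⟩ = X ⟨p, by omega⟩ ⟨q - 1, by omega⟩ := by
      have := keyA h p (q - 1) hp (by omega)
      simpa [hq1] using this
    rw [step, ih (q - 1) (by omega) (by omega) (by omega)]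
    congr 1
    exact Fin.ext (by simp; omega)

end key

/-- The basic intertwiner supported on the diagonal `p - q = (b - min a b) + s`. -/
def diagMat (a b : ℕ) (s : ℕ) : Matrix (Fin b) (Fin a) ℚ :=
  Matrix.of fun p q => if (p : ℕ) = (q : ℕ) + (b - min a b) + s then 1 else 0

lemma diag_comm (s : ℕ) (hs : s < min a b) :
    shiftM b * diagMat a b s = diagMat a b s * shiftM a := by
  funext p q
  have hm : min a b ≤ a ∧ min a b ≤ b := ⟨min_le_left _ _, min_le_right _ _⟩
  by_cases hp : (p : ℕ) = 0
  · rw [mulS_left0 _ _ _ hp]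
    by_cases hq : (q : ℕ) + 1 < a
    · rw [mulS_right _ _ _ ⟨(q : ℕ) + 1, hq⟩ rfl]
      have : ¬ ((0 : ℕ) = ((q : ℕ) + 1) + (b - min a b) + s) := by omega
      simp [diagMat, hp, this]
    · rw [mulS_right0 _ _ _ (by have := q.isLt; omega)]
  · rw [mulS_left _ _ ⟨(p : ℕ) - 1, by have := p.isLt; omega⟩ _ (by simp; omega)]
    by_cases hq : (q : ℕ) + 1 < a
    · rw [mulS_right _ _ _ ⟨(q : ℕ) + 1, hq⟩ rfl]
      simp only [diagMat, Matrix.of_apply]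
      by_cases hd : (p : ℕ) - 1 = (q : ℕ) + (b - min a b) + s
      · rw [if_pos hd, if_pos (by omega)]
      · rw [if_neg hd, if_neg (by omega)]
    · rw [mulS_right0 _ _ _ (by have := q.isLt; omega)]
      have hqa : (q : ℕ) = a - 1 := by have := q.isLt; omega
      have : ¬ ((p : ℕ) - 1 = (q : ℕ) + (b - min a b) + s) := by
        have := p.isLt; omega
      simp [diagMat, this]

lemma repr_eq (ha : 0 < a) {X : Matrix (Fin b) (Fin a) ℚ}
    (h : shiftM b * X = X * shiftM a) :
    X = ∑ s : Fin (min a b),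
      X ⟨b - min a b + (s : ℕ), by have := s.isLt; omega⟩ ⟨0, ha⟩ • diagMat a b (s : ℕ) := by
  funext p q
  rw [Matrix.sum_apply]
  simp only [Matrix.smul_apply, smul_eq_mul]
  have hpl := p.isLt
  have hql := q.isLt
  have hm : min a b ≤ a ∧ min a b ≤ b := ⟨min_le_left _ _, min_le_right _ _⟩
  by_cases hle : (q : ℕ) + (b - min a b) ≤ (p : ℕ)
  · set s0 : Fin (min a b) := ⟨(p : ℕ) - (q : ℕ) - (b - min a b), by omega⟩ with hs0
    rw [Finset.sum_eq_single s0]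
    · have hD : diagMat a b (s0 : ℕ) p q = 1 := by
        simp only [diagMat, Matrix.of_apply, hs0]
        rw [if_pos (by omega)]
      rw [hD, mul_one]
      rw [descend h (q : ℕ) (p : ℕ) hql hpl (by omega)]
      rw [descend h 0 (b - min a b + (s0 : ℕ)) ha (by have := s0.isLt; omega) (by omega)]
      congr 1
      · exact Fin.ext (by simp only [hs0, Fin.val_mk]; omega)
    · intro s _ hs
      have : ¬ ((p : ℕ) = (q : ℕ) + (b - min a b) + (s : ℕ)) := by
        intro hc
        exact hs (Fin.ext (by simp [hs0]; omega))
      simp [diagMat, this]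
    · intro hmem; exact absurd (Finset.mem_univ s0) hmem
  · have hz : ∀ s : Fin (min a b),
        X ⟨b - min a b + (s : ℕ), by have := s.isLt; omega⟩ ⟨0, ha⟩ *
          diagMat a b (s : ℕ) p q = 0 := by
      intro s
      have : ¬ ((p : ℕ) = (q : ℕ) + (b - min a b) + (s : ℕ)) := by omega
      simp [diagMat, this]
    rw [Finset.sum_eq_zero (fun s _ => hz s)]
    by_cases hpq : (p : ℕ) < (q : ℕ)
    · rw [descend' h (p : ℕ) (q : ℕ) hpl hql hpq]
      have h1 : (q : ℕ) - (p : ℕ) - 1 + 1 = (q : ℕ) - (p : ℕ) := by omega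
      have := keyB h (by omega : 0 < b) ((q : ℕ) - (p : ℕ) - 1) (by omega)
      rw [← this]
      congr 1
      exact Fin.ext (by simp; omega)
    · have hd : (p : ℕ) - (q : ℕ) < b - min a b := by omega
      have hab : a < b := by omega
      have hma : min a b = a := by omega
      rw [descend h (q : ℕ) (p : ℕ) hql hpl (by omega)]
      set d := (p : ℕ) - (q : ℕ) with hdd
      have hdb : d + (a - 1) < b := by omega
      have h2 := descend h (a - 1) (d + (a - 1)) (by omega) hdb (by omega)
      have h3 := keyC h ha (d + (a - 1)) (by omega)
      rw [h2] at h3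
      rw [← h3]
      congr 1
      exact Fin.ext (by simp only [Fin.val_mk]; omega)

/-- The weight of the entry `(p,q)` under the `ad x` action. -/
noncomputable def wt (a b : ℕ) (p : Fin b) (q : Fin a) : ℚ :=
  ((b : ℚ) + 1) / 2 - ((p : ℕ) + 1) - (((a : ℚ) + 1) / 2 - ((q : ℕ) + 1))

lemma weylComm_apply (X : Matrix (Fin b) (Fin a) ℚ) (p : Fin b) (q : Fin a) :
    weylComm a b X p q = wt a b p q * X p q := by
  show (weylD b * X - X * weylD a) p q = _
  simp only [weylD, Matrix.sub_apply, Matrix.diagonal_mul, Matrix.mul_diagonal, wt]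
  ring

lemma wt_eq (p : Fin b) (q : Fin a) (s : ℕ)
    (hpq : (p : ℕ) = (q : ℕ) + (b - min a b) + s) :
    wt a b p q = -|(a : ℚ) - (b : ℚ)| / 2 - s := by
  have hm : min a b ≤ b := min_le_right _ _
  have hkey : (p : ℕ) + min a b = (q : ℕ) + b + s := by omega
  rcases le_total a b with hab | hab
  · have hmin : min a b = a := by omega
    rw [hmin] at hkey
    have hc : ((p : ℕ) : ℚ) + a = ((q : ℕ) : ℚ) + b + s := by exact_mod_cast hkey
    rw [abs_of_nonpos (sub_nonpos.mpr (show (a:ℚ) ≤ b by exact_mod_cast hab))]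
    simp only [wt]; linarith
  · have hmin : min a b = b := by omega
    rw [hmin] at hkey
    have hc : ((p : ℕ) : ℚ) + b = ((q : ℕ) : ℚ) + b + s := by exact_mod_cast hkey
    rw [abs_of_nonneg (sub_nonneg.mpr (show (b:ℚ) ≤ a by exact_mod_cast hab))]
    simp only [wt]; linarith

lemma mem_kerS_iff (X : Matrix (Fin b) (Fin a) ℚ) :
    X ∈ LinearMap.ker (shiftComm a b) ↔ shiftM b * X = X * shiftM a := by
  rw [LinearMap.mem_ker]
  show shiftM b * X - X * shiftM a = 0 ↔ _
  rw [sub_eq_zero]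

lemma mem_kerW_iff (t : ℚ) (X : Matrix (Fin b) (Fin a) ℚ) :
    X ∈ LinearMap.ker (weylComm a b - t • LinearMap.id) ↔
      ∀ (p : Fin b) (q : Fin a), (wt a b p q - t) * X p q = 0 := by
  rw [LinearMap.mem_ker, LinearMap.sub_apply, LinearMap.smul_apply, LinearMap.id_apply,
    sub_eq_zero]
  constructor
  · intro h p q
    have := congrFun (congrFun h p) q
    rw [weylComm_apply] at this
    have h2 : (t • X) p q = t * X p q := rfl
    rw [h2] at this
    rw [sub_mul]; linarith
  · intro h
    funext p q
    rw [weylComm_apply]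
    have h2 : (t • X) p q = t * X p q := rfl
    rw [h2]
    have := h p q
    rw [sub_mul] at this
    linarith

lemma diag_li : LinearIndependent ℚ (fun s : Fin (min a b) => diagMat a b (s : ℕ)) := by
  rw [Fintype.linearIndependent_iff]
  intro g hg i
  have hib : b - min a b + (i : ℕ) < b := by have := i.isLt; have := min_le_right a b; omega
  have := congrFun (congrFun hg ⟨b - min a b + (i : ℕ), hib⟩) ⟨0, by have := i.isLt; have := min_le_left a b; omega⟩
  rw [Matrix.sum_apply] at this
  simp only [Matrix.smul_apply, smul_eq_mul] at this
  rw [Finset.sum_eq_single i] at this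
  · have hD : diagMat a b (i : ℕ) ⟨b - min a b + (i : ℕ), hib⟩
        ⟨0, by have := i.isLt; have := min_le_left a b; omega⟩ = 1 := by
      simp only [diagMat, Matrix.of_apply]
      rw [if_pos (by simp)]
    rw [hD, mul_one] at this
    exact this
  · intro s _ hs
    have : ¬ ((b - min a b + (i : ℕ)) = 0 + (b - min a b) + (s : ℕ)) := by
      intro hc; exact hs (Fin.ext (by omega))
    simp only [diagMat, Matrix.of_apply, Fin.val_mk]
    rw [if_neg (by simpa using this), mul_zero]
  · intro hmem; exact absurd (Finset.mem_univ i) hmem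

lemma diag_ne_zero (s : Fin (min a b)) : diagMat a b (s : ℕ) ≠ 0 := by
  intro hc
  have hib : b - min a b + (s : ℕ) < b := by have := s.isLt; have := min_le_right a b; omega
  have h0a : 0 < a := by have := s.isLt; have := min_le_left a b; omega
  have := congrFun (congrFun hc ⟨b - min a b + (s : ℕ), hib⟩) ⟨0, h0a⟩
  simp only [diagMat, Matrix.of_apply, Matrix.zero_apply] at this
  rw [if_pos (by simp)] at this
  exact one_ne_zero this

lemma diag_mem_ker (s : Fin (min a b)) :
    diagMat a b (s : ℕ) ∈ LinearMap.ker (shiftComm a b) :=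
  (mem_kerS_iff _).mpr (diag_comm (s : ℕ) s.isLt)

lemma ker_eq_span (ha : 0 < a) :
    LinearMap.ker (shiftComm a b) =
      Submodule.span ℚ (Set.range (fun s : Fin (min a b) => diagMat a b (s : ℕ))) := by
  apply le_antisymm
  · intro X hX
    rw [repr_eq ha ((mem_kerS_iff X).mp hX)]
    exact Submodule.sum_mem _ fun s _ =>
      Submodule.smul_mem _ _ (Submodule.subset_span ⟨s, rfl⟩)
  · rw [Submodule.span_le]
    rintro _ ⟨s, rfl⟩
    exact diag_mem_ker s

lemma diag_mem_kerW (s : Fin (min a b)) :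
    diagMat a b (s : ℕ) ∈
      LinearMap.ker (weylComm a b - (-|(a : ℚ) - (b : ℚ)| / 2 - (s : ℕ)) • LinearMap.id) := by
  rw [mem_kerW_iff]
  intro p q
  by_cases hpq : (p : ℕ) = (q : ℕ) + (b - min a b) + (s : ℕ)
  · rw [wt_eq p q (s : ℕ) hpq, sub_self, zero_mul]
  · have : diagMat a b (s : ℕ) p q = 0 := by simp [diagMat, hpq]
    rw [this, mul_zero]

end BC

open BC
/-- the space `V = {X : S_b X = X S_a}` has dimension `min a b`, and for
each `t : ℚ` its `ad`-eigenspace `{X ∈ V : D_b X - X D_a = t X}` is one-dimensional if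
`t = -|a-b|/2 - s` for some `0 ≤ s ≤ min a b - 1`, and zero otherwise. -/
theorem block_centralizer_dims (a b : ℕ) (ha : 0 < a) (hb : 0 < b) :
    Module.finrank ℚ (LinearMap.ker (shiftComm a b)) = min a b ∧
    ∀ t : ℚ,
      ((∃ s : ℕ, s ≤ min a b - 1 ∧ t = -|(a : ℚ) - (b : ℚ)| / 2 - (s : ℚ)) →
        Module.finrank ℚ
          ↥(LinearMap.ker (shiftComm a b) ⊓
            LinearMap.ker (weylComm a b - t • LinearMap.id)) = 1) ∧
      (¬ (∃ s : ℕ, s ≤ min a b - 1 ∧ t = -|(a : ℚ) - (b : ℚ)| / 2 - (s : ℚ)) →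
        Module.finrank ℚ
          ↥(LinearMap.ker (shiftComm a b) ⊓
            LinearMap.ker (weylComm a b - t • LinearMap.id)) = 0) := by
  have hmpos : 0 < min a b := lt_min ha hb
  -- coefficients of X on the diagonal basis
  have coeff_prop : ∀ (t : ℚ) (X : Matrix (Fin b) (Fin a) ℚ),
      X ∈ LinearMap.ker (shiftComm a b) ⊓
          LinearMap.ker (weylComm a b - t • LinearMap.id) →
      ∀ s : Fin (min a b),
        (-|(a : ℚ) - (b : ℚ)| / 2 - (s : ℕ) - t) *
          X ⟨b - min a b + (s : ℕ), by have := s.isLt; have := min_le_right a b; omega⟩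
            ⟨0, ha⟩ = 0 := by
    intro t X hX s
    have hW := (mem_kerW_iff t X).mp hX.2
    have hib : b - min a b + (s : ℕ) < b := by
      have := s.isLt; have := min_le_right a b; omega
    have := hW ⟨b - min a b + (s : ℕ), hib⟩ ⟨0, ha⟩
    rwa [wt_eq _ _ (s : ℕ) (by simp)] at this
  constructor
  · rw [ker_eq_span ha, finrank_span_eq_card diag_li, Fintype.card_fin]
  · intro t
    constructor
    · rintro ⟨s, hs, ht⟩
      have hslt : s < min a b := by omega
      set s0 : Fin (min a b) := ⟨s, hslt⟩ with hs0
      have hKeq : LinearMap.ker (shiftComm a b) ⊓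
          LinearMap.ker (weylComm a b - t • LinearMap.id) =
          Submodule.span ℚ {diagMat a b (s0 : ℕ)} := by
        apply le_antisymm
        · intro X hX
          have hrep := repr_eq ha ((mem_kerS_iff X).mp hX.1)
          have hc := coeff_prop t X hX
          rw [hrep]
          apply Submodule.sum_mem
          intro u _
          by_cases hu : u = s0
          · subst hu
            exact Submodule.smul_mem _ _ (Submodule.mem_span_singleton_self _)
          · have hzero : X ⟨b - min a b + (u : ℕ),
                by have := u.isLt; have := min_le_right a b; omega⟩ ⟨0, ha⟩ = 0 := by
              have := hc u
              rcases mul_eq_zero.mp this with h1 | h1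
              · exfalso
                apply hu
                apply Fin.ext
                have : ((u : ℕ) : ℚ) = ((s0 : ℕ) : ℚ) := by
                  rw [ht] at h1
                  simp only [hs0, Fin.val_mk]
                  have : (-|(a : ℚ) - (b : ℚ)| / 2 - (u : ℕ)) =
                      (-|(a : ℚ) - (b : ℚ)| / 2 - (s : ℚ)) := by linarith
                  linarith
                exact_mod_cast this
              · exact h1
            rw [hzero, zero_smul]
            exact Submodule.zero_mem _
        · rw [Submodule.span_le, Set.singleton_subset_iff]
          refine ⟨diag_mem_ker s0, ?_⟩
          have := diag_mem_kerW (a := a) (b := b) s0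
          rwa [show (-|(a : ℚ) - (b : ℚ)| / 2 - ((s0 : ℕ) : ℚ)) = t by rw [ht]]
            at this
      rw [hKeq, finrank_span_singleton (diag_ne_zero s0)]
    · intro hnot
      have hKbot : LinearMap.ker (shiftComm a b) ⊓
          LinearMap.ker (weylComm a b - t • LinearMap.id) = ⊥ := by
        rw [Submodule.eq_bot_iff]
        intro X hX
        have hrep := repr_eq ha ((mem_kerS_iff X).mp hX.1)
        have hc := coeff_prop t X hX
        have hall : ∀ u : Fin (min a b),
            X ⟨b - min a b + (u : ℕ),
              by have := u.isLt; have := min_le_right a b; omega⟩ ⟨0, ha⟩ = 0 := by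
          intro u
          rcases mul_eq_zero.mp (hc u) with h1 | h1
          · exfalso
            apply hnot
            refine ⟨(u : ℕ), by have := u.isLt; omega, ?_⟩
            linarith
          · exact h1
        rw [hrep]
        apply Finset.sum_eq_zero
        intro u _
        rw [hall u, zero_smul]
      rw [hKbot, finrank_bot]
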